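/- Under the exchangeability, positivity, consistency and exposure necessity assumptions of the time-to-event CCE setup, and provided P(E_k^a ≠ 0) > 0 for a ∈ {0,1} and all denominators are nonzero, for every k ∈ {1,…,K} the time-to-event contrast conditional on exposure is identified from observed cumulative incidences: [P(Y_k^1 = 1 | E_k^1 ≠ 0)/P(Y_k^0 = 1 | E_k^0 ≠ 0)] · [P(Y_k^1 = 2 | E_k^1 ≠ 0)/P(Y_k^0 = 2 | E_k^0 ≠ 0)]^{-1} = [μ_k^1(1)/μ_k^1(0)] · [μ_k^2(1)/μ_k^2(0)]^{-1}. -/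

import Mathlib

open MeasureTheory

/-- `prR P B` is the probability `P(B)` as a real number. -/
noncomputable def prR {Ω : Type*} [MeasurableSpace Ω] (P : Measure Ω) (B : Set Ω) : ℝ :=
  (P B).toReal

/-- `cprR P B C` is the conditional probability `P(B | C) = P(B ∩ C) / P(C)`. -/
noncomputable def cprR {Ω : Type*} [MeasurableSpace Ω] (P : Measure Ω) (B C : Set Ω) : ℝ :=
  (P (B ∩ C)).toReal / (P C).toReal

/-- Observed discrete cause-`j` hazard
`h_k^j(a) = P(Y_k = j, Y_{k-1} = 0 | A = a) / P(Y_{k-1} = 0 | A = a)`. -/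
noncomputable def haz {Ω : Type*} [MeasurableSpace Ω] (P : Measure Ω)
    (Y : ℕ → Ω → Fin 3) (A : Ω → Fin 2) (j : Fin 3) (a : Fin 2) (k : ℕ) : ℝ :=
  cprR P ({ω | Y k ω = j} ∩ {ω | Y (k - 1) ω = 0}) {ω | A ω = a}
    / cprR P {ω | Y (k - 1) ω = 0} {ω | A ω = a}

/-- Survival hazard `h_k^0(a)` with the convention `h_0^0(a) = 1`. -/
noncomputable def haz0 {Ω : Type*} [MeasurableSpace Ω] (P : Measure Ω)
    (Y : ℕ → Ω → Fin 3) (A : Ω → Fin 2) (a : Fin 2) (k : ℕ) : ℝ :=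
  if k = 0 then 1 else haz P Y A 0 a k

/-- Observed cumulative incidence `μ_k^j(a) = Σ_{i=1}^k h_i^j(a) · Π_{l=0}^{i-1} h_l^0(a)`. -/
noncomputable def cuminc {Ω : Type*} [MeasurableSpace Ω] (P : Measure Ω)
    (Y : ℕ → Ω → Fin 3) (A : Ω → Fin 2) (j : Fin 3) (a : Fin 2) (k : ℕ) : ℝ :=
  ∑ i ∈ Finset.Icc 1 k, haz P Y A j a i * ∏ l ∈ Finset.range i, haz0 P Y A a l

section CCEAux
open MeasureTheory
set_option linter.unusedSectionVars false
set_option linter.unusedVariables false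

lemma mset_eq' {Ω : Type*} [MeasurableSpace Ω] {β} [MeasurableSpace β]
    [MeasurableSingletonClass β]
    {f : Ω → β} (hf : Measurable f) (c : β) : MeasurableSet {ω | f ω = c} :=
  hf (measurableSet_singleton c)

lemma absorb_le' {Ω : Type*} {Z : ℕ → Ω → Fin 3}
    (h : ∀ k ω, Z k ω ≠ 0 → Z (k+1) ω = Z k ω) {i m : ℕ} (him : i ≤ m)
    (ω : Ω) (hne : Z i ω ≠ 0) : Z m ω = Z i ω := by
  induction m, him using Nat.le_induction with
  | base => rfl
  | succ m him ih => rw [h m ω (by rw [ih]; exact hne), ih]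

lemma first_hit' {Ω : Type*} {Z : ℕ → Ω → Fin 3} (h0 : ∀ ω, Z 0 ω = 0)
    (h : ∀ k ω, Z k ω ≠ 0 → Z (k+1) ω = Z k ω) {j : Fin 3} (hj : j ≠ 0)
    (k : ℕ) (ω : Ω) (hk : Z k ω = j) :
    ∃ i, 1 ≤ i ∧ i ≤ k ∧ Z i ω = j ∧ Z (i-1) ω = 0 := by
  induction k with
  | zero => exact absurd ((h0 ω).symm.trans hk) (Ne.symm hj)
  | succ k ih =>
    by_cases hz : Z k ω = 0
    · exact ⟨k+1, Nat.le_add_left _ _, le_rfl, hk, by simpa using hz⟩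
    · obtain ⟨i, h1, h2, h3, h4⟩ := ih (by rw [← h k ω hz]; exact hk)
      exact ⟨i, h1, h2.trans (Nat.le_succ k), h3, h4⟩

lemma indep_single' {Ω : Type*} [MeasurableSpace Ω] (P : Measure Ω) [IsProbabilityMeasure P]
    (K : ℕ) (Z : ℕ → Ω → Fin 3) (A : Ω → Fin 2)
    (hA : Measurable A) (hZ : ∀ k, Measurable (Z k))
    (exch : ∀ (ys : ℕ → Fin 3) (t : Fin 2),
      P ({ω | ∀ k, k ≤ K → Z k ω = ys k} ∩ {ω | A ω = t})
        = P {ω | ∀ k, k ≤ K → Z k ω = ys k} * P {ω | A ω = t})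
    (k : ℕ) (hk : k ≤ K) (j : Fin 3) (t : Fin 2) :
    P ({ω | Z k ω = j} ∩ {ω | A ω = t}) = P {ω | Z k ω = j} * P {ω | A ω = t} := by
  classical
  set e : (Fin (K+1) → Fin 3) → ℕ → Fin 3 :=
    fun f i => if h : i < K + 1 then f ⟨i, h⟩ else 0 with he
  set S : (Fin (K+1) → Fin 3) → Set Ω :=
    fun f => {ω | ∀ i, i ≤ K → Z i ω = e f i} with hS
  have hmem : ∀ (ω : Ω) (f), ω ∈ S f ↔ (fun i : Fin (K+1) => Z i ω) = f := by
    intro ω f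
    constructor
    · intro h; funext i
      have := h i (Nat.lt_succ_iff.mp i.isLt)
      simpa [he, i.isLt, Fin.is_le i] using this
    · intro h i hi
      have : Z i ω = f ⟨i, Nat.lt_succ_of_le hi⟩ := by rw [← h]
      simp [he, Nat.lt_succ_of_le hi, this, hi, Nat.not_lt.mpr hi]
  have hSm : ∀ f, MeasurableSet (S f) := by
    intro f
    have : S f = ⋂ i, ⋂ (_ : i ≤ K), {ω | Z i ω = e f i} := by
      ext ω; simp [hS, Set.mem_iInter]
    rw [this]
    exact MeasurableSet.iInter fun i => MeasurableSet.iInter fun _ => mset_eq' (hZ i) _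
  set F : Finset (Fin (K+1) → Fin 3) :=
    Finset.univ.filter (fun f => f ⟨k, Nat.lt_succ_of_le hk⟩ = j) with hF
  have hU : {ω | Z k ω = j} = ⋃ f ∈ F, S f := by
    ext ω
    simp only [Set.mem_iUnion, Set.mem_setOf_eq, hF, Finset.mem_filter, Finset.mem_univ, true_and]
    constructor
    · intro h
      exact ⟨fun i => Z i ω, h, (hmem ω _).mpr rfl⟩
    · rintro ⟨f, hfk, hf⟩
      rw [← (hmem ω f).mp hf] at hfk
      exact hfk
  have hdisj : ∀ C : Set Ω, (↑F : Set _).PairwiseDisjoint (fun f => S f ∩ C) := by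
    intro C f _ g _ hfg
    refine Set.disjoint_left.mpr fun ω hωf hωg => hfg ?_
    rw [← (hmem ω f).mp hωf.1, ← (hmem ω g).mp hωg.1]
  have key : ∀ C : Set Ω, MeasurableSet C →
      P ({ω | Z k ω = j} ∩ C) = ∑ f ∈ F, P (S f ∩ C) := by
    intro C hC
    rw [hU, Set.iUnion₂_inter]
    exact measure_biUnion_finset (hdisj C) fun f _ => (hSm f).inter hC
  have h2 := key Set.univ MeasurableSet.univ
  simp only [Set.inter_univ] at h2
  rw [key {ω | A ω = t} (mset_eq' hA t), h2, Finset.sum_mul]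
  refine Finset.sum_congr rfl fun f _ => ?_
  exact exch (e f) t

lemma cuminc_eq' {Ω : Type*} [MeasurableSpace Ω] (P : Measure Ω) [IsProbabilityMeasure P]
    (K : ℕ) (A : Ω → Fin 2) (Y : ℕ → Ω → Fin 3)
    (hA : Measurable A) (hY : ∀ k, Measurable (Y k))
    (Yzero : ∀ ω, Y 0 ω = 0)
    (Yabsorb : ∀ k ω, Y k ω ≠ 0 → Y (k + 1) ω = Y k ω)
    (posA : ∀ a : Fin 2, 0 < prR P {ω | A ω = a})
    (posRisk : ∀ (a : Fin 2) (k : ℕ), 1 ≤ k → k ≤ K →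
      0 < cprR P {ω | Y (k - 1) ω = 0} {ω | A ω = a})
    (j : Fin 3) (hj : j ≠ 0) (a : Fin 2) (k : ℕ) (hkK : k ≤ K) :
    cuminc P Y A j a k = cprR P {ω | Y k ω = j} {ω | A ω = a} := by
  have pApos : (0:ℝ) < (P {ω | A ω = a}).toReal := posA a
  have hprod : ∀ i, 1 ≤ i → i ≤ k →
      ∏ l ∈ Finset.range i, haz0 P Y A a l = cprR P {ω | Y (i-1) ω = 0} {ω | A ω = a} := by
    intro i hi1
    induction i, hi1 using Nat.le_induction with
    | base =>
      intro _
      have h0 : {ω : Ω | Y 0 ω = 0} = Set.univ := by ext ω; simp [Yzero ω]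
      simp [haz0, cprR, h0, div_self pApos.ne']
    | succ i hi1 ih =>
      intro hik
      have hik' : i ≤ k := Nat.le_of_succ_le hik
      rw [Finset.prod_range_succ, ih hik']
      have hne : i ≠ 0 := Nat.one_le_iff_ne_zero.mp hi1
      have hsub : {ω : Ω | Y i ω = 0} ⊆ {ω : Ω | Y (i-1) ω = 0} := by
        intro ω h0
        by_contra hc
        have := Yabsorb (i-1) ω hc
        have he : i - 1 + 1 = i := by omega
        rw [he] at this
        exact hc (show Y (i-1) ω = 0 by rw [← this]; exact h0)
      have hint : {ω : Ω | Y i ω = 0} ∩ {ω : Ω | Y (i-1) ω = 0} = {ω : Ω | Y i ω = 0} :=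
        Set.inter_eq_self_of_subset_left hsub
      have hp0 : cprR P {ω | Y (i-1) ω = 0} {ω | A ω = a} ≠ 0 :=
        (posRisk a i hi1 (hik'.trans hkK)).ne'
      rw [haz0, if_neg hne, haz, hint]
      rw [mul_comm, div_mul_cancel₀ _ hp0]
      simp
  set C : Set Ω := {ω | A ω = a} with hC
  set B : ℕ → Set Ω := fun i => {ω | Y i ω = j} ∩ {ω | Y (i-1) ω = 0} with hB
  have hterm : ∀ i ∈ Finset.Icc 1 k,
      haz P Y A j a i * ∏ l ∈ Finset.range i, haz0 P Y A a l = cprR P (B i) C := by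
    intro i hi
    obtain ⟨hi1, hik⟩ := Finset.mem_Icc.mp hi
    rw [hprod i hi1 hik, haz, div_mul_cancel₀ _ (posRisk a i hi1 (hik.trans hkK)).ne']
  have hUnion : ⋃ i ∈ Finset.Icc 1 k, B i = {ω | Y k ω = j} := by
    ext ω
    simp only [Set.mem_iUnion, Finset.mem_Icc, Set.mem_setOf_eq, hB, Set.mem_inter_iff,
      exists_prop]
    constructor
    · rintro ⟨i, ⟨hi1, hik⟩, hij, _⟩
      rw [absorb_le' Yabsorb hik ω (by rw [hij]; exact hj), hij]
    · intro h
      obtain ⟨i, h1, h2, h3, h4⟩ := first_hit' Yzero Yabsorb hj k ω h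
      exact ⟨i, ⟨h1, h2⟩, h3, h4⟩
  have hdisj : (↑(Finset.Icc 1 k) : Set ℕ).PairwiseDisjoint (fun i => B i ∩ C) := by
    have dis : ∀ i i', 1 ≤ i → i < i' → Disjoint (B i ∩ C) (B i' ∩ C) := by
      intro i i' hi1 hlt
      refine Set.disjoint_left.mpr fun ω hω hω' => ?_
      have hij : Y i ω = j := hω.1.1
      have hii' : i ≤ i' - 1 := Nat.le_sub_one_of_lt hlt
      have : Y (i'-1) ω = Y i ω := absorb_le' Yabsorb hii' ω (by rw [hij]; exact hj)
      have h0 : Y (i'-1) ω = 0 := hω'.1.2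
      rw [h0, hij] at this
      exact hj this.symm
    intro i hi i' hi' hne
    simp only [Finset.coe_Icc, Set.mem_Icc] at hi hi'
    rcases lt_or_gt_of_ne hne with h | h
    · exact dis i i' hi.1 h
    · exact (dis i' i hi'.1 h).symm
  have hmeas : ∀ i ∈ Finset.Icc 1 k, MeasurableSet (B i ∩ C) := fun i _ =>
    (((mset_eq' (hY i) j).inter (mset_eq' (hY (i-1)) 0)).inter (mset_eq' hA a))
  calc cuminc P Y A j a k = ∑ i ∈ Finset.Icc 1 k, cprR P (B i) C :=
        Finset.sum_congr rfl hterm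
    _ = (∑ i ∈ Finset.Icc 1 k, (P (B i ∩ C)).toReal) / (P C).toReal := by
        rw [Finset.sum_div]; rfl
    _ = (P ({ω | Y k ω = j} ∩ C)).toReal / (P C).toReal := by
        rw [← ENNReal.toReal_sum (fun i _ => measure_ne_top P _),
          ← measure_biUnion_finset hdisj hmeas, ← Set.iUnion₂_inter, hUnion]
    _ = cprR P {ω | Y k ω = j} {ω | A ω = a} := rfl

end CCEAux

/-- identification of the time-to-event contrast conditional on exposure
(`CCE_k`) from observed cumulative incidences, under exchangeability, positivity,
consistency and exposure necessity. -/
theorem stmt14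
    {Ω : Type*} [MeasurableSpace Ω] (P : Measure Ω) [IsProbabilityMeasure P] (K : ℕ)
    (A : Ω → Fin 2) (Y : ℕ → Ω → Fin 3)
    (Ya Ea : Fin 2 → ℕ → Ω → Fin 3)
    (hA : Measurable A) (hY : ∀ k, Measurable (Y k))
    (hYa : ∀ a k, Measurable (Ya a k)) (hEa : ∀ a k, Measurable (Ea a k))
    -- structural: value 0 at time 0, absorbing outcomes, absorbing exposure status
    (Yzero : ∀ ω, Y 0 ω = 0)
    (Yabsorb : ∀ k ω, Y k ω ≠ 0 → Y (k + 1) ω = Y k ω)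
    (Yazero : ∀ a ω, Ya a 0 ω = 0)
    (Yaabsorb : ∀ a k ω, Ya a k ω ≠ 0 → Ya a (k + 1) ω = Ya a k ω)
    (Eaabsorb : ∀ a k ω, Ea a k ω ≠ 0 → Ea a (k + 1) ω = Ea a k ω)
    -- exchangeability: the potential outcome history (Y_1^a, …, Y_K^a) ⫫ A
    (exch : ∀ (a t : Fin 2) (ys : ℕ → Fin 3),
      P ({ω | ∀ k, k ≤ K → Ya a k ω = ys k} ∩ {ω | A ω = t})
        = P {ω | ∀ k, k ≤ K → Ya a k ω = ys k} * P {ω | A ω = t})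
    -- positivity
    (posA : ∀ a : Fin 2, 0 < prR P {ω | A ω = a})
    (posRisk : ∀ (a : Fin 2) (k : ℕ), 1 ≤ k → k ≤ K →
      0 < cprR P {ω | Y (k - 1) ω = 0} {ω | A ω = a})
    -- consistency
    (cons : ∀ a : Fin 2, ∀ᵐ ω ∂P, A ω = a → ∀ k, k ≤ K → Ya a k ω = Y k ω)
    -- exposure necessity
    (expnec : ∀ (a : Fin 2) (k : ℕ), k ≤ K → ∀ᵐ ω ∂P, Ea a k ω = 0 → Ya a k ω = 0)
    (k : ℕ) (hk1 : 1 ≤ k) (hkK : k ≤ K)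
    -- conditioning events have positive probability
    (posEne : ∀ a : Fin 2, 0 < prR P {ω | Ea a k ω ≠ 0})
    -- all denominators are nonzero
    (d1 : cprR P {ω | Ya 0 k ω = 1} {ω | Ea 0 k ω ≠ 0} ≠ 0)
    (d2 : cprR P {ω | Ya 0 k ω = 2} {ω | Ea 0 k ω ≠ 0} ≠ 0)
    (d3 : cprR P {ω | Ya 1 k ω = 2} {ω | Ea 1 k ω ≠ 0} ≠ 0)
    (d4 : cuminc P Y A 1 0 k ≠ 0)
    (d5 : cuminc P Y A 2 0 k ≠ 0)
    (d6 : cuminc P Y A 2 1 k ≠ 0) :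
    (cprR P {ω | Ya 1 k ω = 1} {ω | Ea 1 k ω ≠ 0}
        / cprR P {ω | Ya 0 k ω = 1} {ω | Ea 0 k ω ≠ 0})
      * (cprR P {ω | Ya 1 k ω = 2} {ω | Ea 1 k ω ≠ 0}
        / cprR P {ω | Ya 0 k ω = 2} {ω | Ea 0 k ω ≠ 0})⁻¹
      = (cuminc P Y A 1 1 k / cuminc P Y A 1 0 k)
        * (cuminc P Y A 2 1 k / cuminc P Y A 2 0 k)⁻¹ := by
  have hj1 : (1 : Fin 3) ≠ 0 := by decide
  have hj2 : (2 : Fin 3) ≠ 0 := by decide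
  have hq : ∀ (a : Fin 2) (j : Fin 3), j ≠ 0 →
      cuminc P Y A j a k = prR P {ω | Ya a k ω = j} := by
    intro a j hj
    rw [cuminc_eq' P K A Y hA hY Yzero Yabsorb posA posRisk j hj a k hkK]
    have hcons : P ({ω | Y k ω = j} ∩ {ω | A ω = a})
        = P ({ω | Ya a k ω = j} ∩ {ω | A ω = a}) := by
      apply measure_congr
      rw [Filter.eventuallyEq_set]
      filter_upwards [cons a] with ω h
      simp only [Set.mem_inter_iff, Set.mem_setOf_eq]
      constructor
      · rintro ⟨h1, h2⟩
        exact ⟨(h h2 k hkK).trans h1, h2⟩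
      · rintro ⟨h1, h2⟩
        exact ⟨(h h2 k hkK).symm.trans h1, h2⟩
    unfold cprR prR
    rw [hcons, indep_single' P K (Ya a) A hA (hYa a) (fun ys t => exch a t ys) k hkK j a,
      ENNReal.toReal_mul, mul_div_assoc, div_self (show (P {ω | A ω = a}).toReal ≠ 0 from (posA a).ne'), mul_one]
  have hce : ∀ (a : Fin 2) (j : Fin 3), j ≠ 0 →
      cprR P {ω | Ya a k ω = j} {ω | Ea a k ω ≠ 0}
        = prR P {ω | Ya a k ω = j} / prR P {ω | Ea a k ω ≠ 0} := by
    intro a j hj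
    have hnum : P ({ω | Ya a k ω = j} ∩ {ω | Ea a k ω ≠ 0}) = P {ω | Ya a k ω = j} := by
      apply measure_congr
      rw [Filter.eventuallyEq_set]
      filter_upwards [expnec a k hkK] with ω h
      simp only [Set.mem_inter_iff, Set.mem_setOf_eq]
      constructor
      · exact fun h' => h'.1
      · exact fun h' => ⟨h', fun hE0 => hj (h'.symm.trans (h hE0))⟩
    unfold cprR prR
    rw [hnum]
  have he0 : prR P {ω | Ea 0 k ω ≠ 0} ≠ 0 := (posEne 0).ne'
  have he1 : prR P {ω | Ea 1 k ω ≠ 0} ≠ 0 := (posEne 1).ne'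
  have hq01 : prR P {ω | Ya 0 k ω = 1} ≠ 0 := by
    intro h; exact d1 (by rw [hce 0 1 hj1, h, zero_div])
  have hq02 : prR P {ω | Ya 0 k ω = 2} ≠ 0 := by
    intro h; exact d2 (by rw [hce 0 2 hj2, h, zero_div])
  have hq12 : prR P {ω | Ya 1 k ω = 2} ≠ 0 := by
    intro h; exact d3 (by rw [hce 1 2 hj2, h, zero_div])
  rw [hce 1 1 hj1, hce 0 1 hj1, hce 1 2 hj2, hce 0 2 hj2,
    hq 1 1 hj1, hq 0 1 hj1, hq 1 2 hj2, hq 0 2 hj2]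
  field_simp
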